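/- Let K be a commutative Noetherian ring with identity, let A be an associative K-algebra (not necessarily commutative or unital), and let B be a K-subalgebra of A such that the quotient K-module A/B is finitely generated. Then B contains a two-sided ideal I of A such that the quotient K-module B/I is finitely generated (hence A/I is also a finitely generated K-module). -/

import Mathlib

/-- The free non-unital associative `K`-algebra on `X`: the semigroup algebra of the free
semigroup `X⁺` over `K`. -/
abbrev FreeNUAlg (K X : Type*) [CommRing K] : Type _ := MonoidAlgebra K (FreeSemigroup X)

/-- The two-sided ideal (as a `K`-submodule closed under left and right multiplication)
generated by a set in a non-unital `K`-algebra. -/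
def idealSpan (K : Type*) {A : Type*} [CommRing K] [NonUnitalRing A] [Module K A]
    (s : Set A) : Submodule K A :=
  sInf {J : Submodule K A | s ⊆ J ∧ ∀ a b : A, b ∈ J → a * b ∈ J ∧ b * a ∈ J}

/-- A non-unital `K`-algebra is finitely generated if some finite subset generates it as a
`K`-algebra. -/
def NUAlgFG (K A : Type*) [CommRing K] [NonUnitalRing A] [Module K A]
    [IsScalarTower K A A] [SMulCommClass K A A] : Prop :=
  ∃ s : Finset A, NonUnitalAlgebra.adjoin K (s : Set A) = ⊤

/-- A non-unital `K`-algebra is finitely presented if it is isomorphic to the quotient of a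
free algebra `K⟨X⟩` on a finite set `X` by a finitely generated two-sided ideal, i.e. there
is a surjection from some `K⟨X⟩`, `X` finite, whose kernel is a finitely generated
two-sided ideal. -/
def NUAlgFP (K A : Type*) [CommRing K] [NonUnitalRing A] [Module K A]
    [IsScalarTower K A A] [SMulCommClass K A A] : Prop :=
  ∃ (n : ℕ) (f : FreeNUAlg K (Fin n) →ₙₐ[K] A),
    Function.Surjective f ∧
      ∃ s : Finset (FreeNUAlg K (Fin n)),
        ∀ x, f x = 0 ↔ x ∈ idealSpan K (s : Set (FreeNUAlg K (Fin n)))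

/-- Let `K` be a commutative Noetherian ring with identity, `A` an
associative `K`-algebra (not necessarily commutative or unital) and `B` a `K`-subalgebra
such that `A/B` is a finitely generated `K`-module. Then `B` contains a two-sided ideal
`I` of `A` (a `K`-submodule closed under left and right multiplication by elements of `A`)
such that `B/I` is a finitely generated `K`-module, and hence `A/I` is also a finitely
generated `K`-module. -/
theorem exists_ideal_of_finite_corank
    (K A : Type*) [CommRing K] [IsNoetherianRing K]
    [NonUnitalRing A] [Module K A] [IsScalarTower K A A] [SMulCommClass K A A]
    (B : NonUnitalSubalgebra K A)
    (hB : Module.Finite K (A ⧸ B.toSubmodule)) :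
    ∃ I : Submodule K A,
      (∀ a b : A, b ∈ I → a * b ∈ I ∧ b * a ∈ I) ∧
      I ≤ B.toSubmodule ∧
      Module.Finite K (B.toSubmodule ⧸ I.comap B.toSubmodule.subtype) ∧
      Module.Finite K (A ⧸ I) := by
  classical
  set Bs := B.toSubmodule with hBsdef
  set V := A ⧸ Bs
  set π := Bs.mkQ with hπ
  -- generators of A / B
  have hπ0 : ∀ z : A, π z = 0 ↔ z ∈ Bs := fun z => Submodule.Quotient.mk_eq_zero _
  obtain ⟨s, hs⟩ := Module.finite_def.mp hB
  choose g hg using Bs.mkQ_surjective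
  set t : Finset A := s.image g with ht
  have htχ : Fintype ↥(t : Set A) := inferInstance
  -- key saturation lemma
  have key : ∀ T : Submodule K A, Bs ≤ T → (∀ x ∈ t, x ∈ T) → ∀ a : A, a ∈ T := by
    intro T hBT htT a
    have hsub : (s : Set (A ⧸ Bs)) ⊆ ↑(T.map π) := by
      intro v hv
      exact ⟨g v, htT _ (Finset.mem_image_of_mem g hv), hg v⟩
    have h1 : π a ∈ T.map π := by
      have : π a ∈ Submodule.span K (s : Set (A ⧸ Bs)) := by rw [hs]; trivial
      exact Submodule.span_le.mpr hsub this
    obtain ⟨a', haT, ha'⟩ := h1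
    have : a - a' ∈ Bs := by
      rw [← Submodule.Quotient.eq]
      exact ha'.symm
    have : a - a' ∈ T := hBT this
    simpa using T.add_mem this haT
  -- the ideal
  set I : Submodule K A :=
    { carrier := {b | b ∈ Bs ∧ (∀ a : A, a * b ∈ Bs) ∧ (∀ a : A, b * a ∈ Bs) ∧
        ∀ a a' : A, a * (b * a') ∈ Bs}
      zero_mem' := by simp
      add_mem' := by
        rintro b c ⟨hb0, hb1, hb2, hb3⟩ ⟨hc0, hc1, hc2, hc3⟩
        refine ⟨Bs.add_mem hb0 hc0, fun a => ?_, fun a => ?_, fun a a' => ?_⟩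
        · rw [mul_add]; exact Bs.add_mem (hb1 a) (hc1 a)
        · rw [add_mul]; exact Bs.add_mem (hb2 a) (hc2 a)
        · rw [add_mul, mul_add]; exact Bs.add_mem (hb3 a a') (hc3 a a')
      smul_mem' := by
        rintro k b ⟨hb0, hb1, hb2, hb3⟩
        refine ⟨Bs.smul_mem k hb0, fun a => ?_, fun a => ?_, fun a a' => ?_⟩
        · rw [mul_smul_comm]; exact Bs.smul_mem k (hb1 a)
        · rw [smul_mul_assoc]; exact Bs.smul_mem k (hb2 a)
        · rw [smul_mul_assoc, mul_smul_comm]; exact Bs.smul_mem k (hb3 a a') } with hIdef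
  have memI : ∀ b : A, b ∈ I ↔ b ∈ Bs ∧ (∀ a : A, a * b ∈ Bs) ∧ (∀ a : A, b * a ∈ Bs) ∧
      ∀ a a' : A, a * (b * a') ∈ Bs := fun b => Iff.rfl
  have hIB : I ≤ Bs := fun b hb => ((memI b).mp hb).1
  -- two sided
  have htwo : ∀ a b : A, b ∈ I → a * b ∈ I ∧ b * a ∈ I := by
    intro c b hb
    obtain ⟨hb0, hb1, hb2, hb3⟩ := (memI b).mp hb
    constructor
    · refine (memI _).mpr ⟨hb1 c, fun a => ?_, fun a => ?_, fun a a' => ?_⟩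
      · rw [← mul_assoc]; exact hb1 (a * c)
      · rw [mul_assoc]; exact hb3 c a
      · rw [mul_assoc c, ← mul_assoc a]
        exact hb3 (a * c) a'
    · refine (memI _).mpr ⟨hb2 c, fun a => ?_, fun a => ?_, fun a a' => ?_⟩
      · exact hb3 a c
      · rw [mul_assoc]; exact hb2 (c * a)
      · rw [mul_assoc b]
        exact hb3 a (c * a')
  -- the comparison linear map
  set Φ : Bs →ₗ[K] ((↥(t : Set A) → V) × (↥(t : Set A) → V) × (↥(t : Set A) → ↥(t : Set A) → V)) :=
    { toFun := fun b => (fun x => π ((x : A) * (b : A)), fun x => π ((b : A) * (x : A)),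
        fun x y => π ((x : A) * ((b : A) * (y : A))))
      map_add' := by
        intro b c
        refine Prod.ext (funext fun x => ?_) (Prod.ext (funext fun x => ?_)
          (funext fun x => funext fun y => ?_)) <;>
          simp [mul_add, add_mul]
      map_smul' := by
        intro k b
        refine Prod.ext (funext fun x => ?_) (Prod.ext (funext fun x => ?_)
          (funext fun x => funext fun y => ?_)) <;>
          simp [mul_smul_comm, smul_mul_assoc] } with hΦdef
  -- kernel of Φ
  have hker : LinearMap.ker Φ = I.comap Bs.subtype := by
    ext b
    simp only [LinearMap.mem_ker, Submodule.mem_comap, Submodule.coe_subtype]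
    constructor
    · intro h
      have h1 : ∀ x ∈ t, x * (b : A) ∈ Bs := by
        intro x hx
        have := congrFun (congrArg Prod.fst h) ⟨x, hx⟩
        exact (hπ0 _).mp this
      have h2 : ∀ x ∈ t, (b : A) * x ∈ Bs := by
        intro x hx
        have := congrFun (congrArg (fun p => p.2.1) h) ⟨x, hx⟩
        exact (hπ0 _).mp this
      have h3 : ∀ x ∈ t, ∀ y ∈ t, x * ((b : A) * y) ∈ Bs := by
        intro x hx y hy
        have := congrFun (congrFun (congrArg (fun p => p.2.2) h) ⟨x, hx⟩) ⟨y, hy⟩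
        exact (hπ0 _).mp this
      -- upgrade to all of A
      have right : ∀ a : A, (b : A) * a ∈ Bs := by
        refine key (Bs.comap (LinearMap.mulLeft K (b : A))) (fun a ha => ?_) (fun x hx => h2 x hx)
        exact B.mul_mem b.2 ha
      have left : ∀ a : A, a * (b : A) ∈ Bs := by
        refine key (Bs.comap (LinearMap.mulRight K (b : A))) (fun a ha => ?_) (fun x hx => h1 x hx)
        exact B.mul_mem ha b.2
      have mid1 : ∀ x ∈ t, ∀ a : A, x * ((b : A) * a) ∈ Bs := by
        intro x hx
        refine key (Bs.comap ((LinearMap.mulLeft K x).comp (LinearMap.mulLeft K (b : A))))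
          (fun a ha => ?_) (fun y hy => h3 x hx y hy)
        show x * ((b : A) * a) ∈ Bs
        rw [← mul_assoc]
        exact B.mul_mem (h1 x hx) ha
      have mid : ∀ a a' : A, a * ((b : A) * a') ∈ Bs := by
        intro a a'
        refine key (Bs.comap (LinearMap.mulRight K ((b : A) * a'))) (fun c hc => ?_)
          (fun x hx => mid1 x hx a') a
        exact B.mul_mem hc (right a')
      exact (memI _).mpr ⟨b.2, left, right, mid⟩
    · intro h
      obtain ⟨hb0, hb1, hb2, hb3⟩ := (memI _).mp h
      refine Prod.ext (funext fun x => ?_) (Prod.ext (funext fun x => ?_)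
        (funext fun x => funext fun y => ?_))
      · exact (hπ0 _).mpr (hb1 x)
      · exact (hπ0 _).mpr (hb2 x)
      · exact (hπ0 _).mpr (hb3 x y)
  -- finiteness of B / I
  haveI : IsNoetherian K V := isNoetherian_of_isNoetherianRing_of_finite K V
  haveI : Module.Finite K ↥(LinearMap.range Φ) := inferInstance
  have hBI : Module.Finite K (Bs ⧸ I.comap Bs.subtype) := by
    rw [← hker]
    exact Module.Finite.equiv Φ.quotKerEquivRange.symm
  refine ⟨I, htwo, hIB, hBI, ?_⟩
  -- finiteness of A / I via the exact sequence B/I → A/I → A/B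
  haveI := hBI
  haveI : IsNoetherian K (Bs ⧸ I.comap Bs.subtype) :=
    isNoetherian_of_isNoetherianRing_of_finite K _
  have hle : I.comap Bs.subtype ≤ LinearMap.ker (I.mkQ ∘ₗ Bs.subtype) := by
    intro b hb
    simp only [LinearMap.mem_ker, LinearMap.coe_comp, Function.comp_apply,
      Submodule.coe_subtype, Submodule.mkQ_apply, Submodule.Quotient.mk_eq_zero]
    exact hb
  set f : (Bs ⧸ I.comap Bs.subtype) →ₗ[K] (A ⧸ I) :=
    (I.comap Bs.subtype).liftQ (I.mkQ ∘ₗ Bs.subtype) hle with hfdef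
  have hgle : I ≤ LinearMap.ker Bs.mkQ := by rw [Submodule.ker_mkQ]; exact hIB
  set q : (A ⧸ I) →ₗ[K] V := I.liftQ Bs.mkQ hgle with hqdef
  have hrange : LinearMap.range f = LinearMap.ker q := by
    rw [hfdef, hqdef, Submodule.range_liftQ, Submodule.ker_liftQ, Submodule.ker_mkQ,
      LinearMap.range_comp, Submodule.range_subtype]
  haveI : IsNoetherian K (A ⧸ I) := isNoetherian_of_range_eq_ker f q hrange
  exact inferInstance
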